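/- Uniform convergence of the subsample means: under conditions (C1) and (C3) (in particular log K = o(√n)), the maximal deviation max_{1 ≤ k ≤ K} |μ̂^{(k)} − μ| converges to 0 in probability along the sequence of experiments, where μ = E(X_1). -/

import Mathlib

open MeasureTheory ProbabilityTheory Filter Asymptotics
open scoped ENNReal NNReal Topology

/-- The subsample mean `μ̂⁽ᵏ⁾ = n⁻¹ ∑ₘ X_{i_m^{(k)}}` based on the subsample drawn by
the index map `idxk`. -/
noncomputable def subMean {Ω : Type*} {N n : ℕ} (X : ℕ → Ω → ℝ)
    (idxk : Fin n → Ω → Fin N) (ω : Ω) : ℝ :=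
  (n : ℝ)⁻¹ * ∑ m, X (idxk m ω).val ω

/-- The leave-one-out subsample mean `μ̂⁽ᵏ⁾₋ₘ = (n-1)⁻¹ ∑_{m' ≠ m} X_{i_{m'}^{(k)}}`. -/
noncomputable def looMean {Ω : Type*} {N n : ℕ} (X : ℕ → Ω → ℝ)
    (idxk : Fin n → Ω → Fin N) (m : Fin n) (ω : Ω) : ℝ :=
  ((n : ℝ) - 1)⁻¹ * ∑ m' ∈ Finset.univ.erase m, X (idxk m' ω).val ω

/-- The subsample one-shot (SOS) estimator `θ̂_SOS = K⁻¹ ∑ₖ g(μ̂⁽ᵏ⁾)`. -/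
noncomputable def sosEst {Ω : Type*} {N n K : ℕ} (g : ℝ → ℝ) (X : ℕ → Ω → ℝ)
    (idxs : Fin K → Fin n → Ω → Fin N) (ω : Ω) : ℝ :=
  (K : ℝ)⁻¹ * ∑ k, g (subMean X (idxs k) ω)

/-- The jackknife-debiased estimator based on the `k`-th subsample:
`θ̂⁽ᵏ⁾_JDS = θ̂⁽ᵏ⁾ − (n−1)(n⁻¹ ∑ₘ θ̂⁽ᵏ⁾₋ₘ − θ̂⁽ᵏ⁾)`. -/
noncomputable def jdsK {Ω : Type*} {N n : ℕ} (g : ℝ → ℝ) (X : ℕ → Ω → ℝ)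
    (idxk : Fin n → Ω → Fin N) (ω : Ω) : ℝ :=
  g (subMean X idxk ω) -
    ((n : ℝ) - 1) *
      ((n : ℝ)⁻¹ * ∑ m, g (looMean X idxk m ω) - g (subMean X idxk ω))

/-- The jackknife-debiased subsample (JDS) estimator `θ̂_JDS = K⁻¹ ∑ₖ θ̂⁽ᵏ⁾_JDS`. -/
noncomputable def jdsEst {Ω : Type*} {N n K : ℕ} (g : ℝ → ℝ) (X : ℕ → Ω → ℝ)
    (idxs : Fin K → Fin n → Ω → Fin N) (ω : Ω) : ℝ :=
  (K : ℝ)⁻¹ * ∑ k, jdsK g X (idxs k) ω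

/-- The squared jackknife standard error (JSE) estimator
`SÊ² = (K⁻¹ + n/N) K⁻¹ ∑ₖ ∑ₘ (θ̂⁽ᵏ⁾₋ₘ − θ̂⁽ᵏ⁾)²`. -/
noncomputable def jseSq {Ω : Type*} {N n K : ℕ} (g : ℝ → ℝ) (X : ℕ → Ω → ℝ)
    (idxs : Fin K → Fin n → Ω → Fin N) (ω : Ω) : ℝ :=
  ((K : ℝ)⁻¹ + (n : ℝ) / (N : ℝ)) * (K : ℝ)⁻¹ *
    ∑ k, ∑ m, (g (looMean X (idxs k) m ω) - g (subMean X (idxs k) ω)) ^ 2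


lemma exp_cvx {B t z : ℝ} (hB : 0 < B) (hz : |z| ≤ B) :
    Real.exp (t * z) ≤ (B - z) / (2 * B) * Real.exp (-(t * B)) +
      (B + z) / (2 * B) * Real.exp (t * B) := by
  have hz1 : -B ≤ z := (abs_le.1 hz).1
  have hz2 : z ≤ B := (abs_le.1 hz).2
  have ha : (0:ℝ) ≤ (B - z) / (2 * B) := div_nonneg (by linarith) (by linarith)
  have hb : (0:ℝ) ≤ (B + z) / (2 * B) := by
    apply div_nonneg (by linarith) (by linarith)
  have hab : (B - z) / (2 * B) + (B + z) / (2 * B) = 1 := by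
    field_simp; ring
  have := convexOn_exp.2 (Set.mem_univ (-(t*B))) (Set.mem_univ (t*B)) ha hb hab
  simp only [smul_eq_mul] at this
  have harg : (B - z) / (2 * B) * -(t * B) + (B + z) / (2 * B) * (t * B) = t * z := by
    field_simp; ring
  rwa [harg] at this

lemma sum_exp_le {N : ℕ} (hN : 0 < N) (z : Fin N → ℝ) (B t : ℝ) (hB : 0 < B)
    (hz : ∀ j, |z j| ≤ B) (hsum : ∑ j, z j = 0) :
    ∑ j, Real.exp (t * z j) ≤ N * Real.exp (t ^ 2 * B ^ 2 / 2) := by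
  have h1 : ∑ j, Real.exp (t * z j) ≤
      ∑ j : Fin N, ((B - z j) / (2 * B) * Real.exp (-(t * B)) +
        (B + z j) / (2 * B) * Real.exp (t * B)) :=
    Finset.sum_le_sum fun j _ => exp_cvx hB (hz j)
  have h2 : ∑ j : Fin N, ((B - z j) / (2 * B) * Real.exp (-(t * B)) +
      (B + z j) / (2 * B) * Real.exp (t * B)) = N * Real.cosh (t * B) := by
    rw [Real.cosh_eq]
    rw [Finset.sum_add_distrib, ← Finset.sum_mul, ← Finset.sum_mul]
    rw [← Finset.sum_div, ← Finset.sum_div, Finset.sum_sub_distrib, Finset.sum_add_distrib,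
      hsum, Finset.sum_const, Finset.card_univ, Fintype.card_fin]
    field_simp
    ring
  have h3 : Real.cosh (t * B) ≤ Real.exp ((t * B) ^ 2 / 2) := Real.cosh_le_exp_half_sq _
  calc ∑ j, Real.exp (t * z j) ≤ N * Real.cosh (t * B) := h1.trans_eq h2
    _ ≤ N * Real.exp (t ^ 2 * B ^ 2 / 2) := by
        rw [mul_pow] at h3
        exact mul_le_mul_of_nonneg_left h3 (Nat.cast_nonneg N)

lemma mgf_factor {N n : ℕ} (z : Fin N → ℝ) (t : ℝ) :
    ∑ i : Fin n → Fin N, Real.exp (t * ∑ m, z (i m)) = (∑ j, Real.exp (t * z j)) ^ n := by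
  have : ∀ i : Fin n → Fin N, Real.exp (t * ∑ m, z (i m)) = ∏ m, Real.exp (t * z (i m)) := by
    intro i
    rw [Finset.mul_sum, Real.exp_sum]
  simp_rw [this]
  rw [← Fintype.piFinset_univ,
    ← Finset.prod_univ_sum (fun _ : Fin n => (Finset.univ : Finset (Fin N)))
      (fun _ j => Real.exp (t * z j))]
  simp [Finset.prod_const]

lemma card_dev_le {N n : ℕ} (hN : 0 < N) (hn : 0 < n) (x : Fin N → ℝ) (L δ : ℝ)
    (hL : 0 < L) (hδ : 0 < δ) (hx : ∀ j, |x j| ≤ L) :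
    ((Finset.univ.filter (fun i : Fin n → Fin N =>
        δ ≤ |(n:ℝ)⁻¹ * ∑ m, x (i m) - (N:ℝ)⁻¹ * ∑ j, x j|)).card : ℝ)
      ≤ (N:ℝ)^n * (2 * Real.exp (-(n * δ^2 / (8 * L^2)))) := by
  have hNR : (0:ℝ) < N := Nat.cast_pos.2 hN
  have hnR : (0:ℝ) < n := Nat.cast_pos.2 hn
  set xb : ℝ := (N:ℝ)⁻¹ * ∑ j, x j with hxb
  set z : Fin N → ℝ := fun j => x j - xb with hz
  set s : (Fin n → Fin N) → ℝ := fun i => ∑ m, z (i m) with hs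
  have hxbabs : |xb| ≤ L := by
    rw [hxb, abs_mul, abs_inv, Nat.abs_cast]
    rw [inv_mul_le_iff₀ hNR]
    calc |∑ j, x j| ≤ ∑ j, |x j| := Finset.abs_sum_le_sum_abs _ _
      _ ≤ ∑ _j : Fin N, L := Finset.sum_le_sum fun j _ => hx j
      _ = N * L := by rw [Finset.sum_const, Finset.card_univ, Fintype.card_fin, nsmul_eq_mul]
  have hzB : ∀ j, |z j| ≤ 2 * L := by
    intro j
    calc |z j| = |x j - xb| := rfl
      _ ≤ |x j| + |xb| := abs_sub _ _
      _ ≤ L + L := add_le_add (hx j) hxbabs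
      _ = 2 * L := by ring
  have hzsum : ∑ j, z j = 0 := by
    simp only [hz, Finset.sum_sub_distrib, Finset.sum_const, Finset.card_univ, Fintype.card_fin,
      nsmul_eq_mul, hxb]
    field_simp
    ring
  -- rewrite the deviation in terms of s
  have hdev : ∀ i : Fin n → Fin N,
      (n:ℝ)⁻¹ * ∑ m, x (i m) - xb = (n:ℝ)⁻¹ * s i := by
    intro i
    simp only [hs, hz, Finset.sum_sub_distrib, Finset.sum_const, Finset.card_univ,
      Fintype.card_fin, nsmul_eq_mul]
    field_simp
  set lam : ℝ := δ / (4 * L^2) with hlam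
  have hlampos : 0 < lam := by positivity
  set A := Finset.univ.filter (fun i : Fin n → Fin N =>
      δ ≤ |(n:ℝ)⁻¹ * ∑ m, x (i m) - (N:ℝ)⁻¹ * ∑ j, x j|) with hA
  have key : ∀ i ∈ A, (1:ℝ) ≤ Real.exp (lam * s i - lam * n * δ)
      + Real.exp (-(lam * s i) - lam * n * δ) := by
    intro i hi
    rw [hA, Finset.mem_filter] at hi
    have h1 : δ ≤ |(n:ℝ)⁻¹ * s i| := by rw [← hdev i]; exact hi.2
    rw [abs_mul, abs_inv, Nat.abs_cast] at h1
    have h2 : (n:ℝ) * δ ≤ |s i| := (le_inv_mul_iff₀ hnR).1 h1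
    rcases le_total 0 (s i) with hsgn | hsgn
    · rw [abs_of_nonneg hsgn] at h2
      have h3 : (0:ℝ) ≤ lam * s i - lam * n * δ := by nlinarith
      have e1 : (1:ℝ) ≤ Real.exp (lam * s i - lam * ↑n * δ) := Real.one_le_exp h3
      have e2 := Real.exp_pos (-(lam * s i) - lam * ↑n * δ)
      linarith
    · rw [abs_of_nonpos hsgn] at h2
      have h3 : (0:ℝ) ≤ -(lam * s i) - lam * n * δ := by nlinarith
      have e1 : (1:ℝ) ≤ Real.exp (-(lam * s i) - lam * ↑n * δ) := Real.one_le_exp h3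
      have e2 := Real.exp_pos (lam * s i - lam * ↑n * δ)
      linarith
  have cardle : (A.card : ℝ) ≤ ∑ i : Fin n → Fin N,
      (Real.exp (lam * s i - lam * ↑n * δ) + Real.exp (-(lam * s i) - lam * ↑n * δ)) := by
    calc (A.card : ℝ) = ∑ _i ∈ A, (1:ℝ) := by simp
      _ ≤ ∑ i ∈ A, (Real.exp (lam * s i - lam * ↑n * δ)
            + Real.exp (-(lam * s i) - lam * ↑n * δ)) := Finset.sum_le_sum key
      _ ≤ ∑ i : Fin n → Fin N, (Real.exp (lam * s i - lam * ↑n * δ)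
            + Real.exp (-(lam * s i) - lam * ↑n * δ)) :=
        Finset.sum_le_sum_of_subset_of_nonneg (Finset.subset_univ A)
          (fun i _ _ => by positivity)
  have hsplit : ∑ i : Fin n → Fin N,
      (Real.exp (lam * s i - lam * ↑n * δ) + Real.exp (-(lam * s i) - lam * ↑n * δ))
      = Real.exp (-(lam * ↑n * δ)) *
        ((∑ j, Real.exp (lam * z j)) ^ n + (∑ j, Real.exp (-lam * z j)) ^ n) := by
    have r1 : ∀ i : Fin n → Fin N, Real.exp (lam * s i - lam * ↑n * δ)
        = Real.exp (-(lam * ↑n * δ)) * Real.exp (lam * s i) := by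
      intro i; rw [← Real.exp_add]; ring_nf
    have r2 : ∀ i : Fin n → Fin N, Real.exp (-(lam * s i) - lam * ↑n * δ)
        = Real.exp (-(lam * ↑n * δ)) * Real.exp (-lam * s i) := by
      intro i; rw [← Real.exp_add]; ring_nf
    simp_rw [r1, r2, ← mul_add, ← Finset.mul_sum, Finset.sum_add_distrib]
    congr 1
    rw [mgf_factor z lam, mgf_factor z (-lam)]
  have hf1 : (∑ j, Real.exp (lam * z j)) ^ n
      ≤ ((N:ℝ) * Real.exp (lam ^ 2 * (2 * L) ^ 2 / 2)) ^ n := by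
    apply pow_le_pow_left₀ (Finset.sum_nonneg fun j _ => (Real.exp_pos _).le)
    exact sum_exp_le hN z (2 * L) lam (by positivity) hzB hzsum
  have hf2 : (∑ j, Real.exp (-lam * z j)) ^ n
      ≤ ((N:ℝ) * Real.exp (lam ^ 2 * (2 * L) ^ 2 / 2)) ^ n := by
    apply pow_le_pow_left₀ (Finset.sum_nonneg fun j _ => (Real.exp_pos _).le)
    have := sum_exp_le hN z (2 * L) (-lam) (by positivity) hzB hzsum
    rw [neg_pow] at this
    norm_num at this
    simpa [neg_mul] using this
  have hfinal : Real.exp (-(lam * ↑n * δ)) *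
      ((∑ j, Real.exp (lam * z j)) ^ n + (∑ j, Real.exp (-lam * z j)) ^ n)
      ≤ (N:ℝ)^n * (2 * Real.exp (-(↑n * δ^2 / (8 * L^2)))) := by
    have hb : ((N:ℝ) * Real.exp (lam ^ 2 * (2 * L) ^ 2 / 2)) ^ n
        = (N:ℝ)^n * Real.exp (↑n * (lam ^ 2 * (2 * L) ^ 2 / 2)) := by
      rw [mul_pow, ← Real.exp_nat_mul]
    have step : Real.exp (-(lam * ↑n * δ)) *
        ((∑ j, Real.exp (lam * z j)) ^ n + (∑ j, Real.exp (-lam * z j)) ^ n)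
        ≤ Real.exp (-(lam * ↑n * δ)) *
          (2 * ((N:ℝ)^n * Real.exp (↑n * (lam ^ 2 * (2 * L) ^ 2 / 2)))) := by
      apply mul_le_mul_of_nonneg_left _ (Real.exp_pos _).le
      rw [← hb]; linarith
    refine step.trans (le_of_eq ?_)
    have hre : Real.exp (-(lam * ↑n * δ)) *
        (2 * ((N:ℝ)^n * Real.exp (↑n * (lam ^ 2 * (2 * L) ^ 2 / 2))))
        = (N:ℝ)^n * (2 * Real.exp (↑n * (lam ^ 2 * (2 * L) ^ 2 / 2) + -(lam * ↑n * δ))) := by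
      rw [Real.exp_add]; ring
    rw [hre]
    congr 2
    rw [hlam]
    have hL2 : L ≠ 0 := ne_of_gt hL
    field_simp
    ring
  calc (A.card : ℝ) ≤ _ := cardle
    _ = _ := hsplit
    _ ≤ _ := hfinal

lemma unif_dev_le {N n : ℕ} (hN : 0 < N) (hn : 0 < n) (ν : Measure (Fin n → Fin N))
    (hν : ∀ g : Fin n → Fin N, ν {g} = ((N : ℝ≥0∞) ^ n)⁻¹)
    (x : Fin N → ℝ) (L δ : ℝ) (hL : 0 < L) (hδ : 0 < δ) (hx : ∀ j, |x j| ≤ L) :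
    ν {i : Fin n → Fin N | δ ≤ |(n:ℝ)⁻¹ * ∑ m, x (i m) - (N:ℝ)⁻¹ * ∑ j, x j|}
      ≤ ENNReal.ofReal (2 * Real.exp (-(n * δ^2 / (8 * L^2)))) := by
  classical
  set p : (Fin n → Fin N) → Prop :=
    fun i => δ ≤ |(n:ℝ)⁻¹ * ∑ m, x (i m) - (N:ℝ)⁻¹ * ∑ j, x j| with hp
  have hAeq : {i : Fin n → Fin N | p i}
      = ⋃ g ∈ Finset.univ.filter p, ({g} : Set (Fin n → Fin N)) := by
    ext i; simp [hp]
  rw [hAeq, measure_biUnion_finset]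
  · have : ∀ g ∈ Finset.univ.filter p, ν {g} = ((N : ℝ≥0∞) ^ n)⁻¹ := fun g _ => hν g
    rw [Finset.sum_congr rfl this, Finset.sum_const, nsmul_eq_mul]
    have hcard := card_dev_le hN hn x L δ hL hδ hx
    have hNn0 : ((N : ℝ≥0∞) ^ n) ≠ 0 := by
      apply pow_ne_zero
      simpa using hN.ne'
    have hNntop : ((N : ℝ≥0∞) ^ n) ≠ ⊤ := by
      exact ENNReal.pow_ne_top (ENNReal.natCast_ne_top N)
    have hle : ((Finset.univ.filter p).card : ℝ≥0∞)
        ≤ (N : ℝ≥0∞) ^ n * ENNReal.ofReal (2 * Real.exp (-(n * δ^2 / (8 * L^2)))) := by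
      have h1 : ((Finset.univ.filter p).card : ℝ≥0∞)
          = ENNReal.ofReal ((Finset.univ.filter p).card : ℝ) := by
        rw [ENNReal.ofReal_natCast]
      have h2 : (N : ℝ≥0∞) ^ n * ENNReal.ofReal (2 * Real.exp (-(n * δ^2 / (8 * L^2))))
          = ENNReal.ofReal ((N:ℝ)^n * (2 * Real.exp (-(n * δ^2 / (8 * L^2))))) := by
        rw [ENNReal.ofReal_mul (by positivity : (0:ℝ) ≤ (N:ℝ)^n)]
        congr 1
        rw [ENNReal.ofReal_pow (by positivity), ENNReal.ofReal_natCast]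
      rw [h1, h2]
      exact ENNReal.ofReal_le_ofReal hcard
    calc ((Finset.univ.filter p).card : ℝ≥0∞) * ((N : ℝ≥0∞) ^ n)⁻¹
        ≤ ((N : ℝ≥0∞) ^ n * ENNReal.ofReal (2 * Real.exp (-(n * δ^2 / (8 * L^2)))))
          * ((N : ℝ≥0∞) ^ n)⁻¹ := mul_le_mul_left hle _
      _ = ENNReal.ofReal (2 * Real.exp (-(n * δ^2 / (8 * L^2)))) := by
          rw [mul_comm ((N : ℝ≥0∞) ^ n) _, mul_assoc, ENNReal.mul_inv_cancel hNn0 hNntop,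
            mul_one]
  · intro g _ g' _ hne
    exact Set.disjoint_singleton.2 hne
  · intro g _
    exact measurableSet_singleton g

lemma measurable_eval_pair {N : ℕ} :
    Measurable (fun q : (Fin N → ℝ) × Fin N => q.1 q.2) := by
  have heq : (fun q : (Fin N → ℝ) × Fin N => q.1 q.2)
      = fun q => ∑ j : Fin N, if q.2 = j then q.1 j else 0 := by
    funext q
    rw [Finset.sum_ite_eq (Finset.univ) q.2 (fun j => q.1 j)]
    simp
  rw [heq]
  apply Finset.measurable_sum
  intro j _
  apply Measurable.ite
  · exact measurable_snd (measurableSet_singleton j)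
  · exact (measurable_pi_apply j).comp measurable_fst
  · exact measurable_const

lemma core_bound {Ω : Type*} [MeasurableSpace Ω] (P : Measure Ω) [IsProbabilityMeasure P]
    {N n : ℕ} (hN : 0 < N) (hn : 0 < n)
    (X : ℕ → Ω → ℝ) (hXmeas : ∀ i, Measurable (X i))
    (I : Fin n → Ω → Fin N) (hImeas : ∀ m, Measurable (I m))
    (hIindep : iIndepFun I P)
    (hIX : IndepFun (fun ω (m : Fin n) => I m ω) (fun ω (j : Fin N) => X j.val ω) P)
    (hunif : ∀ m (j : Fin N), P (I m ⁻¹' {j}) = (N : ℝ≥0∞)⁻¹)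
    (L δ : ℝ) (hL : 0 < L) (hδ : 0 < δ) :
    P ({ω | δ ≤ |(n:ℝ)⁻¹ * ∑ m, X (I m ω).val ω - (N:ℝ)⁻¹ * ∑ j : Fin N, X j.val ω|}
        ∩ {ω | ∀ j : Fin N, |X j.val ω| ≤ L})
      ≤ ENNReal.ofReal (2 * Real.exp (-(n * δ^2 / (8 * L^2)))) := by
  set Ivec : Ω → (Fin n → Fin N) := fun ω m => I m ω with hIvec
  set Xvec : Ω → (Fin N → ℝ) := fun ω j => X j.val ω with hXvec
  have hIvecMeas : Measurable Ivec := measurable_pi_lambda _ fun m => hImeas m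
  have hXvecMeas : Measurable Xvec := measurable_pi_lambda _ fun j => hXmeas j.val
  -- the law of the index vector
  set νI : Measure (Fin n → Fin N) := P.map Ivec with hνI
  have hνIsingleton : ∀ g : Fin n → Fin N, νI {g} = ((N : ℝ≥0∞) ^ n)⁻¹ := by
    intro g
    rw [hνI, Measure.map_apply hIvecMeas (measurableSet_singleton g)]
    have hpre : Ivec ⁻¹' {g} = ⋂ m, I m ⁻¹' {g m} := by
      ext ω
      simp [hIvec, funext_iff]
    rw [hpre, hIindep.meas_iInter fun m => ⟨{g m}, measurableSet_singleton _, rfl⟩]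
    have : ∀ m : Fin n, P (I m ⁻¹' {g m}) = (N : ℝ≥0∞)⁻¹ := fun m => hunif m (g m)
    rw [Finset.prod_congr rfl fun m _ => this m, Finset.prod_const, Finset.card_univ,
      Fintype.card_fin, ← ENNReal.inv_pow]
  -- the target set in the product space
  set S : Set ((Fin N → ℝ) × (Fin n → Fin N)) :=
    {q | δ ≤ |(n:ℝ)⁻¹ * ∑ m, q.1 (q.2 m) - (N:ℝ)⁻¹ * ∑ j, q.1 j| ∧ ∀ j, |q.1 j| ≤ L}
    with hS
  have hSmeas : MeasurableSet S := by
    apply MeasurableSet.inter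
    · have hmeas : Measurable (fun q : (Fin N → ℝ) × (Fin n → Fin N) =>
          |(n:ℝ)⁻¹ * ∑ m, q.1 (q.2 m) - (N:ℝ)⁻¹ * ∑ j, q.1 j|) := by
        apply Measurable.abs
        apply Measurable.sub
        · apply Measurable.const_mul
          apply Finset.measurable_sum
          intro m _
          exact measurable_eval_pair.comp
            (measurable_fst.prodMk ((measurable_pi_apply m).comp measurable_snd))
        · apply Measurable.const_mul
          apply Finset.measurable_sum
          intro j _
          exact (measurable_pi_apply j).comp measurable_fst
      exact measurableSet_le measurable_const hmeas
    · show MeasurableSet {q : (Fin N → ℝ) × (Fin n → Fin N) | ∀ j, |q.1 j| ≤ L}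
      have : {q : (Fin N → ℝ) × (Fin n → Fin N) | ∀ j, |q.1 j| ≤ L}
          = ⋂ j, {q : (Fin N → ℝ) × (Fin n → Fin N) | |q.1 j| ≤ L} := by
        ext q; simp
      rw [this]
      apply MeasurableSet.iInter
      intro j
      exact measurableSet_le
        (Measurable.abs (fun s hs => ((measurable_pi_apply j).comp measurable_fst) hs))
        measurable_const
  have hpairMeas : Measurable (fun ω => (Xvec ω, Ivec ω)) := hXvecMeas.prodMk hIvecMeas
  have hEeq : {ω | δ ≤ |(n:ℝ)⁻¹ * ∑ m, X (I m ω).val ω - (N:ℝ)⁻¹ * ∑ j : Fin N, X j.val ω|}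
        ∩ {ω | ∀ j : Fin N, |X j.val ω| ≤ L}
      = (fun ω => (Xvec ω, Ivec ω)) ⁻¹' S := by
    ext ω
    simp [hS, hIvec, hXvec, Set.mem_setOf_eq]
  rw [hEeq, ← Measure.map_apply hpairMeas hSmeas]
  have hmap : P.map (fun ω => (Xvec ω, Ivec ω)) = (P.map Xvec).prod νI := by
    rw [hνI]
    exact (indepFun_iff_map_prod_eq_prod_map_map hXvecMeas.aemeasurable
      hIvecMeas.aemeasurable).1 hIX.symm
  rw [hmap, Measure.prod_apply hSmeas]
  have hbound : ∀ x : Fin N → ℝ, νI (Prod.mk x ⁻¹' S)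
      ≤ ENNReal.ofReal (2 * Real.exp (-(n * δ^2 / (8 * L^2)))) := by
    intro x
    by_cases hx : ∀ j, |x j| ≤ L
    · have hsub : Prod.mk x ⁻¹' S
          ⊆ {i : Fin n → Fin N | δ ≤ |(n:ℝ)⁻¹ * ∑ m, x (i m) - (N:ℝ)⁻¹ * ∑ j, x j|} := by
        intro i hi
        exact hi.1
      exact (measure_mono hsub).trans (unif_dev_le hN hn νI hνIsingleton x L δ hL hδ hx)
    · have hempty : Prod.mk x ⁻¹' S = ∅ := by
        ext i
        simp only [Set.mem_preimage, Set.mem_empty_iff_false, iff_false]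
        intro hi
        exact hx hi.2
      rw [hempty]
      simp
  have : IsProbabilityMeasure (P.map Xvec) := Measure.isProbabilityMeasure_map hXvecMeas.aemeasurable
  calc ∫⁻ x, νI (Prod.mk x ⁻¹' S) ∂(P.map Xvec)
      ≤ ∫⁻ _x, ENNReal.ofReal (2 * Real.exp (-(n * δ^2 / (8 * L^2)))) ∂(P.map Xvec) :=
        lintegral_mono hbound
    _ = ENNReal.ofReal (2 * Real.exp (-(n * δ^2 / (8 * L^2)))) := by
        rw [lintegral_const, measure_univ, mul_one]

lemma iIndepFun_comp_right {Ω ι ι' β : Type*} [MeasurableSpace Ω] {P : Measure Ω}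
    [mβ : MeasurableSpace β] {f : ι → Ω → β}
    (h : iIndepFun f P) (g : ι' → ι) (hg : Function.Injective g) :
    iIndepFun (fun i' => f (g i')) P := by
  classical
  rw [iIndepFun_iff] at h ⊢
  intro s f' hf'
  set F : ι → Set Ω := fun i => ⋂ i' ∈ s.filter (fun i' => g i' = i), f' i' with hF
  have hFg : ∀ i₀ ∈ s, F (g i₀) = f' i₀ := by
    intro i₀ hi₀
    have : s.filter (fun i' => g i' = g i₀) = {i₀} := by
      ext i'
      simp only [Finset.mem_filter, Finset.mem_singleton]
      constructor
      · rintro ⟨_, h2⟩; exact hg h2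
      · rintro rfl; exact ⟨hi₀, rfl⟩
    rw [hF]
    simp only [this, Finset.set_biInter_singleton]
  have hFmeas : ∀ i, i ∈ s.image g → MeasurableSet[mβ.comap (f i)] (F i) := by
    intro i hi
    apply MeasurableSet.biInter (Finset.countable_toSet _)
    intro i' hi'
    rw [Finset.mem_coe, Finset.mem_filter] at hi'
    rcases hf' i' hi'.1 with ⟨t, ht, hpre⟩
    exact ⟨t, ht, by rw [← hi'.2]; exact hpre⟩
  have := h (s.image g) hFmeas
  have hL : ⋂ i ∈ s.image g, F i = ⋂ i' ∈ s, f' i' := by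
    ext ω
    simp only [Set.mem_iInter, Finset.mem_image]
    constructor
    · intro hω i' hi'
      rw [← hFg i' hi']
      exact hω (g i') ⟨i', hi', rfl⟩
    · rintro hω i ⟨i', hi', rfl⟩
      rw [hFg i' hi']
      exact hω i' hi'
  have hR : ∏ i ∈ s.image g, P (F i) = ∏ i' ∈ s, P (f' i') := by
    rw [Finset.prod_image (fun a _ b _ hab => hg hab)]
    exact Finset.prod_congr rfl fun i₀ hi₀ => by rw [hFg i₀ hi₀]
  rw [hL, hR] at this
  exact this

lemma integrable_of_subgaussian {Ω : Type*} [MeasurableSpace Ω] (P : Measure Ω)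
    [IsProbabilityMeasure P] {f : Ω → ℝ} (hf : Measurable f) {C ν : ℝ} (hC : 0 < C)
    (hν : 0 < ν)
    (h : ∀ s : ℝ, 0 < s → P {ω | s < |f ω|} ≤ ENNReal.ofReal (C * Real.exp (-ν * s ^ 2))) :
    Integrable f P := by
  refine ⟨hf.aestronglyMeasurable, ?_⟩
  rw [hasFiniteIntegral_iff_norm]
  have habs : ∀ ω, ‖f ω‖ = |f ω| := fun ω => Real.norm_eq_abs _
  simp_rw [habs]
  rw [lintegral_eq_lintegral_meas_lt P (Eventually.of_forall fun ω => abs_nonneg _)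
    hf.abs.aemeasurable]
  have hbound : ∫⁻ t in Set.Ioi (0:ℝ), P {a | t < |f a|}
      ≤ ∫⁻ t in Set.Ioi (0:ℝ), ENNReal.ofReal (C * Real.exp (-ν * t ^ 2)) := by
    apply setLIntegral_mono
    · apply ENNReal.measurable_ofReal.comp
      apply Measurable.const_mul
      exact (Real.measurable_exp.comp ((measurable_id.pow_const 2).const_mul (-ν)))
    · intro t ht
      exact h t ht
  refine lt_of_le_of_lt hbound ?_
  have hint : Integrable (fun t : ℝ => C * Real.exp (-ν * t ^ 2)) (volume.restrict (Set.Ioi 0)) := by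
    apply Integrable.restrict
    exact (integrable_exp_neg_mul_sq hν).const_mul C
  exact hint.lintegral_lt_top

/-- uniform convergence of the subsample means. Under (C1) and (C3)
(in particular `log K = o(√n)`), `max_{1 ≤ k ≤ K} |μ̂⁽ᵏ⁾ − μ| → 0` in probability,
where `μ = E(X₁)`. -/
theorem subsample_means_uniform_consistency
    {Ω : Type*} [MeasurableSpace Ω] (P : Measure Ω) [IsProbabilityMeasure P]
    -- the sequence of experiments: whole-sample sizes N_t, subsample sizes n_t,
    -- numbers of subsamples K_t
    (Nseq nseq Kseq : ℕ → ℕ)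
    (hn2 : ∀ t, 2 ≤ nseq t) (hK1 : ∀ t, 1 ≤ Kseq t)
    -- an i.i.d. sequence of real random variables; experiment t uses X₀, …, X_{N_t - 1}
    (X : ℕ → Ω → ℝ)
    (hXmeas : ∀ i, Measurable (X i))
    (hXindep : iIndepFun X P)
    (hXident : ∀ i, IdentDistrib (X i) (X 0) P P)
    -- for each experiment t, the sampling indices: measurable, mutually independent,
    -- independent of (X₁, …, X_{N_t}), and uniform on {1, …, N_t}
    (idx : ∀ t, Fin (Kseq t) → Fin (nseq t) → Ω → Fin (Nseq t))
    (hidxmeas : ∀ t k m, Measurable (idx t k m))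
    (hidxindep : ∀ t, iIndepFun
      (fun p : Fin (Kseq t) × Fin (nseq t) => idx t p.1 p.2) P)
    (hidxX : ∀ t, IndepFun
      (fun ω (p : Fin (Kseq t) × Fin (nseq t)) => idx t p.1 p.2 ω)
      (fun ω (i : Fin (Nseq t)) => X i.val ω) P)
    (hunif : ∀ t k m (j : Fin (Nseq t)), P (idx t k m ⁻¹' {j}) = (Nseq t : ℝ≥0∞)⁻¹)
    -- (C1) sub-Gaussian distribution
    (hsubG : ∃ C ν : ℝ, 0 < C ∧ 0 < ν ∧
      ∀ s : ℝ, 0 < s → P {ω | s < |X 0 ω|} ≤ ENNReal.ofReal (C * Real.exp (-ν * s ^ 2)))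
    -- (C3) subsampling condition: n → ∞, n < N, N = o(n⁴), log K = o(√n)
    (hn_inf : Tendsto nseq atTop atTop)
    (hnN : ∀ t, nseq t < Nseq t)
    (hN_inf : Tendsto Nseq atTop atTop)
    (hNn4 : (fun t => (Nseq t : ℝ)) =o[atTop] fun t => (nseq t : ℝ) ^ 4)
    (hlogK : (fun t => Real.log (Kseq t)) =o[atTop] fun t => Real.sqrt (nseq t))
    (μ : ℝ) (hμ : μ = ∫ ω, X 0 ω ∂P) :
    TendstoInMeasure P
      (fun t ω => ⨆ k : Fin (Kseq t), |subMean X (idx t k) ω - μ|)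
      atTop (fun _ => 0) := by
  rw [tendstoInMeasure_iff_dist]
  intro ε hε
  obtain ⟨C, ν, hC, hν, htail⟩ := hsubG
  -- truncation level
  set L : ℕ → ℝ := fun t => Real.sqrt (2 * Real.log (Nseq t) / ν) with hLdef
  -- whole-sample mean
  set Xbar : ℕ → Ω → ℝ := fun t ω => ((Nseq t : ℝ))⁻¹ * ∑ j : Fin (Nseq t), X j.val ω
    with hXbardef
  have hNpos : ∀ t, 0 < Nseq t := fun t => lt_trans (lt_of_lt_of_le Nat.zero_lt_two (hn2 t)) (hnN t)
  have hnpos : ∀ t, 0 < nseq t := fun t => lt_of_lt_of_le Nat.zero_lt_two (hn2 t)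
  -- Term 1 : LLN
  have hXbarMeas : ∀ t, Measurable (Xbar t) := by
    intro t
    exact (Finset.measurable_sum Finset.univ fun j _ => hXmeas j.val).const_mul _
  have hT1 : Tendsto (fun t => P {ω | ε / 2 ≤ dist (Xbar t ω) μ}) atTop (𝓝 0) := by
    have hint : Integrable (X 0) P :=
      integrable_of_subgaussian P (hXmeas 0) hC hν htail
    have hpair : Pairwise (Function.onFun (IndepFun · · P) X) := fun i j hij => hXindep.indepFun hij
    have hslln := strong_law_ae_real X hint hpair hXident
    have hae : ∀ᵐ ω ∂P, Tendsto (fun t => Xbar t ω) atTop (𝓝 μ) := by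
      filter_upwards [hslln] with ω hω
      have hcomp := hω.comp hN_inf
      rw [hμ]
      apply hcomp.congr
      intro t
      show (∑ i ∈ Finset.range (Nseq t), X i ω) / (Nseq t) = Xbar t ω
      rw [hXbardef]
      rw [← Fin.sum_univ_eq_sum_range (fun i => X i ω) (Nseq t)]
      rw [div_eq_inv_mul]
    have hTIM : TendstoInMeasure P Xbar atTop (fun _ => μ) :=
      tendstoInMeasure_of_tendsto_ae (fun t => (hXbarMeas t).aestronglyMeasurable) hae
    exact tendstoInMeasure_iff_dist.1 hTIM (ε / 2) (half_pos hε)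
  -- Term 2 : maximum of the sample
  have hT2 : Tendsto (fun t => ENNReal.ofReal (C / (Nseq t : ℝ))) atTop (𝓝 0) := by
    have hNR : Tendsto (fun t => (Nseq t : ℝ)) atTop atTop :=
      tendsto_natCast_atTop_atTop.comp hN_inf
    have : Tendsto (fun t => C / (Nseq t : ℝ)) atTop (𝓝 0) :=
      Tendsto.div_atTop tendsto_const_nhds hNR
    have := ENNReal.tendsto_ofReal this
    rwa [ENNReal.ofReal_zero] at this
  -- Term 3 : union bound over the K subsamples
  have hsqrtInf : Tendsto (fun t => Real.sqrt (nseq t)) atTop atTop := by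
    rw [tendsto_atTop]
    intro b
    have hev := hn_inf.eventually_ge_atTop (Nat.ceil (b ^ 2))
    filter_upwards [hev] with t ht
    have h1 : b ^ 2 ≤ (nseq t : ℝ) := by
      calc b ^ 2 ≤ (Nat.ceil (b ^ 2) : ℝ) := Nat.le_ceil _
        _ ≤ (nseq t : ℝ) := Nat.cast_le.2 ht
    calc b ≤ |b| := le_abs_self b
      _ = Real.sqrt (b ^ 2) := (Real.sqrt_sq_eq_abs b).symm
      _ ≤ Real.sqrt (nseq t) := Real.sqrt_le_sqrt h1
  set c : ℝ := ε ^ 2 * ν / 512 with hcdef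
  have hcpos : 0 < c := by positivity
  have hT3 : Tendsto (fun t => ENNReal.ofReal ((Kseq t : ℝ) *
      (2 * Real.exp (-((nseq t : ℝ) * (ε / 2) ^ 2 / (8 * (L t) ^ 2)))))) atTop (𝓝 0) := by
    have hg : Tendsto (fun t => 2 * Real.exp (-(c / 2) * Real.sqrt (nseq t))) atTop (𝓝 0) := by
      have h1 : Tendsto (fun t => -(c / 2) * Real.sqrt (nseq t)) atTop atBot := by
        have := hsqrtInf.const_mul_atTop (r := c / 2) (by positivity)
        have hneg : (fun t => -(c / 2) * Real.sqrt (nseq t))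
            = fun t => -((c / 2) * Real.sqrt (nseq t)) := by funext t; ring
        rw [hneg]
        exact tendsto_neg_atTop_atBot.comp this
      have h2 := Real.tendsto_exp_atBot.comp h1
      have := h2.const_mul (2 : ℝ)
      simpa using this
    have hfg : ∀ᶠ t in atTop, (Kseq t : ℝ) *
        (2 * Real.exp (-((nseq t : ℝ) * (ε / 2) ^ 2 / (8 * (L t) ^ 2))))
        ≤ 2 * Real.exp (-(c / 2) * Real.sqrt (nseq t)) := by
      have hevN2 : ∀ᶠ t in atTop, 2 ≤ Nseq t := hN_inf.eventually_ge_atTop 2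
      have hevNn : ∀ᶠ t in atTop, (Nseq t : ℝ) ≤ (nseq t : ℝ) ^ 4 := by
        filter_upwards [hNn4.def one_pos] with t ht
        rwa [Real.norm_natCast, one_mul, Real.norm_eq_abs,
          abs_of_nonneg (by positivity : (0:ℝ) ≤ (nseq t : ℝ) ^ 4)] at ht
      have hevK : ∀ᶠ t in atTop, |Real.log (Kseq t)| ≤ c / 2 * Real.sqrt (nseq t) := by
        filter_upwards [hlogK.def (by positivity : (0:ℝ) < c / 2)] with t ht
        rwa [Real.norm_eq_abs, Real.norm_eq_abs,
          abs_of_nonneg (Real.sqrt_nonneg _)] at ht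
      filter_upwards [hevN2, hevNn, hevK] with t hN2 hNn hK
      have hNR1 : (1:ℝ) < (Nseq t : ℝ) := by exact_mod_cast hN2
      have hlogN : 0 < Real.log (Nseq t) := Real.log_pos hNR1
      have hL2 : (L t) ^ 2 = 2 * Real.log (Nseq t) / ν := by
        rw [hLdef]
        exact Real.sq_sqrt (by positivity)
      have hsqn : (0:ℝ) < Real.sqrt (nseq t) := Real.sqrt_pos.2 (by
        exact_mod_cast hnpos t)
      have hsq2 : Real.sqrt (nseq t) ^ 2 = (nseq t : ℝ) :=
        Real.sq_sqrt (by positivity)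
      -- log N ≤ 8 √n
      have hlogn : Real.log (nseq t) ≤ 2 * Real.sqrt (nseq t) := by
        have h1 : Real.log (nseq t) = 2 * Real.log (Real.sqrt (nseq t)) := by
          rw [Real.log_sqrt (by positivity)]; ring
        have h2 : Real.log (Real.sqrt (nseq t)) ≤ Real.sqrt (nseq t) - 1 :=
          Real.log_le_sub_one_of_pos hsqn
        linarith
      have hlogNle : Real.log (Nseq t) ≤ 8 * Real.sqrt (nseq t) := by
        have h1 : Real.log (Nseq t) ≤ Real.log ((nseq t : ℝ) ^ 4) :=
          Real.log_le_log (by exact_mod_cast hNpos t) hNn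
        rw [Real.log_pow] at h1
        push_cast at h1
        linarith
      -- the exponent bound
      have hexp : c * Real.sqrt (nseq t)
          ≤ (nseq t : ℝ) * (ε / 2) ^ 2 / (8 * (L t) ^ 2) := by
        rw [hL2]
        rw [le_div_iff₀ (by positivity)]
        have hνne : ν ≠ 0 := ne_of_gt hν
        have heq1 : c * Real.sqrt (nseq t) * (8 * (2 * Real.log (Nseq t) / ν))
            = ε ^ 2 / 32 * (Real.sqrt (nseq t) * Real.log (Nseq t)) := by
          rw [hcdef]; field_simp; ring
        have h2 : ε ^ 2 / 32 * (Real.sqrt (nseq t) * Real.log (Nseq t))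
            ≤ ε ^ 2 / 32 * (Real.sqrt (nseq t) * (8 * Real.sqrt (nseq t))) := by
          apply mul_le_mul_of_nonneg_left _ (by positivity)
          exact mul_le_mul_of_nonneg_left hlogNle hsqn.le
        have h3 : ε ^ 2 / 32 * (Real.sqrt (nseq t) * (8 * Real.sqrt (nseq t)))
            = (nseq t : ℝ) * (ε / 2) ^ 2 := by
          rw [show Real.sqrt (nseq t) * (8 * Real.sqrt (nseq t))
              = 8 * (Real.sqrt (nseq t) * Real.sqrt (nseq t)) by ring,
            Real.mul_self_sqrt (by positivity)]
          ring
        linarith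
      have hKpos : (0:ℝ) < (Kseq t : ℝ) := by exact_mod_cast hK1 t
      have hKle : Real.log (Kseq t) ≤ c / 2 * Real.sqrt (nseq t) :=
        (le_abs_self _).trans hK
      have hfinal : Real.log (Kseq t)
          + -((nseq t : ℝ) * (ε / 2) ^ 2 / (8 * (L t) ^ 2))
          ≤ -(c / 2) * Real.sqrt (nseq t) := by
        have := hexp
        linarith
      calc (Kseq t : ℝ) * (2 * Real.exp (-((nseq t : ℝ) * (ε / 2) ^ 2 / (8 * (L t) ^ 2))))
          = 2 * Real.exp (Real.log (Kseq t)
            + -((nseq t : ℝ) * (ε / 2) ^ 2 / (8 * (L t) ^ 2))) := by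
            rw [Real.exp_add, Real.exp_log hKpos]; ring
        _ ≤ 2 * Real.exp (-(c / 2) * Real.sqrt (nseq t)) := by
            have := Real.exp_le_exp.2 hfinal
            linarith
    have hsq : Tendsto (fun t => (Kseq t : ℝ) *
        (2 * Real.exp (-((nseq t : ℝ) * (ε / 2) ^ 2 / (8 * (L t) ^ 2))))) atTop (𝓝 0) := by
      apply squeeze_zero' (Eventually.of_forall fun t => by positivity) hfg hg
    have := ENNReal.tendsto_ofReal hsq
    rwa [ENNReal.ofReal_zero] at this
  -- the eventual bound
  have hmain : ∀ᶠ t in atTop,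
      P {ω | ε ≤ dist (⨆ k : Fin (Kseq t), |subMean X (idx t k) ω - μ|) 0}
      ≤ P {ω | ε / 2 ≤ dist (Xbar t ω) μ} + ENNReal.ofReal (C / (Nseq t : ℝ))
        + ENNReal.ofReal ((Kseq t : ℝ) *
            (2 * Real.exp (-((nseq t : ℝ) * (ε / 2) ^ 2 / (8 * (L t) ^ 2))))) := by
    have hevN2 : ∀ᶠ t in atTop, 2 ≤ Nseq t := hN_inf.eventually_ge_atTop 2
    filter_upwards [hevN2] with t hN2
    have hNR1 : (1:ℝ) < (Nseq t : ℝ) := by exact_mod_cast hN2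
    have hNRpos : (0:ℝ) < (Nseq t : ℝ) := by linarith
    have hlogN : 0 < Real.log (Nseq t) := Real.log_pos hNR1
    have hL2 : (L t) ^ 2 = 2 * Real.log (Nseq t) / ν := by
      rw [hLdef]; exact Real.sq_sqrt (by positivity)
    have hLpos : 0 < L t := by
      rw [hLdef]; exact Real.sqrt_pos.2 (by positivity)
    haveI : Nonempty (Fin (Kseq t)) := ⟨⟨0, hK1 t⟩⟩
    set A : Set Ω := {ω | ε / 2 ≤ dist (Xbar t ω) μ} with hA
    set B : Set Ω := ⋃ j : Fin (Nseq t), {ω | L t < |X j.val ω|} with hB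
    set Ck : Fin (Kseq t) → Set Ω := fun k =>
      {ω | ε / 2 ≤ |(nseq t : ℝ)⁻¹ * ∑ m, X (idx t k m ω).val ω
          - (Nseq t : ℝ)⁻¹ * ∑ j : Fin (Nseq t), X j.val ω|}
        ∩ {ω | ∀ j : Fin (Nseq t), |X j.val ω| ≤ L t} with hCk
    have hincl : {ω | ε ≤ dist (⨆ k : Fin (Kseq t), |subMean X (idx t k) ω - μ|) 0}
        ⊆ A ∪ B ∪ ⋃ k, Ck k := by
      intro ω hω
      simp only [Set.mem_setOf_eq] at hω
      by_cases hAmem : ω ∈ A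
      · exact Or.inl (Or.inl hAmem)
      by_cases hBmem : ω ∈ B
      · exact Or.inl (Or.inr hBmem)
      right
      have hBmem' : ∀ j : Fin (Nseq t), |X j.val ω| ≤ L t := by
        intro j
        by_contra hcon
        exact hBmem (Set.mem_iUnion.2 ⟨j, lt_of_not_ge hcon⟩)
      have hAmem' : ¬ (ε / 2 ≤ dist (Xbar t ω) μ) := hAmem
      rw [Real.dist_eq] at hAmem'
      push_neg at hAmem'
      obtain ⟨k₀, hk₀⟩ := exists_eq_ciSup_of_finite
        (f := fun k : Fin (Kseq t) => |subMean X (idx t k) ω - μ|)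
      rw [← hk₀, Real.dist_eq, sub_zero, abs_abs] at hω
      have htri : |subMean X (idx t k₀) ω - μ|
          ≤ |subMean X (idx t k₀) ω - Xbar t ω| + |Xbar t ω - μ| :=
        abs_sub_le _ _ _
      have hdev : ε / 2 ≤ |subMean X (idx t k₀) ω - Xbar t ω| := by linarith
      refine Set.mem_iUnion.2 ⟨k₀, ?_, hBmem'⟩
      show ε / 2 ≤ |(nseq t : ℝ)⁻¹ * ∑ m, X (idx t k₀ m ω).val ω
          - (Nseq t : ℝ)⁻¹ * ∑ j : Fin (Nseq t), X j.val ω|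
      exact hdev
    calc P {ω | ε ≤ dist (⨆ k : Fin (Kseq t), |subMean X (idx t k) ω - μ|) 0}
        ≤ P (A ∪ B ∪ ⋃ k, Ck k) := measure_mono hincl
      _ ≤ P (A ∪ B) + P (⋃ k, Ck k) := measure_union_le _ _
      _ ≤ (P A + P B) + P (⋃ k, Ck k) := by
          exact add_le_add_left (measure_union_le _ _) _
      _ ≤ P A + ENNReal.ofReal (C / (Nseq t : ℝ))
          + ENNReal.ofReal ((Kseq t : ℝ) *
            (2 * Real.exp (-((nseq t : ℝ) * (ε / 2) ^ 2 / (8 * (L t) ^ 2))))) := by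
          apply add_le_add (add_le_add_right ?_ _) ?_
          · -- bound on P B
            have hPB : P B ≤ ∑ j : Fin (Nseq t), P {ω | L t < |X j.val ω|} :=
              measure_iUnion_fintype_le P _
            have htailj : ∀ j : Fin (Nseq t), P {ω | L t < |X j.val ω|}
                ≤ ENNReal.ofReal (C * Real.exp (-ν * (L t) ^ 2)) := by
              intro j
              have hid : IdentDistrib (fun ω => |X j.val ω|) (fun ω => |X 0 ω|) P P :=
                (hXident j.val).comp measurable_abs
              have hpre : {ω | L t < |X j.val ω|}
                  = (fun ω => |X j.val ω|) ⁻¹' Set.Ioi (L t) := rfl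
              have hpre0 : {ω | L t < |X 0 ω|}
                  = (fun ω => |X 0 ω|) ⁻¹' Set.Ioi (L t) := rfl
              rw [hpre, hid.measure_mem_eq measurableSet_Ioi, ← hpre0]
              exact htail (L t) hLpos
            have hexpL : C * Real.exp (-ν * (L t) ^ 2) = C / ((Nseq t : ℝ) ^ 2) := by
              rw [hL2]
              have harg : -ν * (2 * Real.log (Nseq t) / ν) = -(Real.log ((Nseq t : ℝ) ^ 2)) := by
                rw [Real.log_pow]
                field_simp
                ring
              rw [harg, Real.exp_neg, Real.exp_log (by positivity)]
              ring
            calc P B ≤ ∑ j : Fin (Nseq t), P {ω | L t < |X j.val ω|} := hPB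
              _ ≤ ∑ _j : Fin (Nseq t), ENNReal.ofReal (C * Real.exp (-ν * (L t) ^ 2)) :=
                Finset.sum_le_sum fun j _ => htailj j
              _ = (Nseq t : ℝ≥0∞) * ENNReal.ofReal (C / ((Nseq t : ℝ) ^ 2)) := by
                rw [Finset.sum_const, Finset.card_univ, Fintype.card_fin, nsmul_eq_mul, hexpL]
              _ = ENNReal.ofReal ((Nseq t : ℝ) * (C / ((Nseq t : ℝ) ^ 2))) := by
                rw [ENNReal.ofReal_mul (by positivity), ENNReal.ofReal_natCast]
              _ = ENNReal.ofReal (C / (Nseq t : ℝ)) := by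
                congr 1
                field_simp
          · -- bound on the union of the Ck
            have hPCk : ∀ k, P (Ck k) ≤ ENNReal.ofReal
                (2 * Real.exp (-((nseq t : ℝ) * (ε / 2) ^ 2 / (8 * (L t) ^ 2)))) := by
              intro k
              have hIindep : iIndepFun
                  (fun m => idx t k m) P := by
                have hinj : Function.Injective (fun m : Fin (nseq t) => ((k, m) :
                    Fin (Kseq t) × Fin (nseq t))) := fun a b hab => by
                  simpa using congrArg Prod.snd hab
                exact iIndepFun_comp_right (hidxindep t)
                  (fun m : Fin (nseq t) => (k, m)) hinj
              have hφmeas : Measurable (fun f : (Fin (Kseq t) × Fin (nseq t)) → Fin (Nseq t) =>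
                  (fun m : Fin (nseq t) => f (k, m))) :=
                measurable_pi_lambda _ fun m => measurable_pi_apply _
              have hIX : IndepFun (fun ω (m : Fin (nseq t)) => idx t k m ω)
                  (fun ω (j : Fin (Nseq t)) => X j.val ω) P :=
                (hidxX t).comp hφmeas measurable_id
              exact core_bound P (hNpos t) (hnpos t) X hXmeas (fun m => idx t k m)
                (fun m => hidxmeas t k m) hIindep hIX (fun m j => hunif t k m j)
                (L t) (ε / 2) hLpos (half_pos hε)
            calc P (⋃ k, Ck k) ≤ ∑ k : Fin (Kseq t), P (Ck k) :=
                measure_iUnion_fintype_le P _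
              _ ≤ ∑ _k : Fin (Kseq t), ENNReal.ofReal
                  (2 * Real.exp (-((nseq t : ℝ) * (ε / 2) ^ 2 / (8 * (L t) ^ 2)))) :=
                Finset.sum_le_sum fun k _ => hPCk k
              _ = ENNReal.ofReal ((Kseq t : ℝ) *
                  (2 * Real.exp (-((nseq t : ℝ) * (ε / 2) ^ 2 / (8 * (L t) ^ 2))))) := by
                rw [Finset.sum_const, Finset.card_univ, Fintype.card_fin, nsmul_eq_mul,
                  ← ENNReal.ofReal_natCast (Kseq t), ← ENNReal.ofReal_mul (by positivity)]
  -- conclude by squeezing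
  have hG : Tendsto (fun t => P {ω | ε / 2 ≤ dist (Xbar t ω) μ}
      + ENNReal.ofReal (C / (Nseq t : ℝ))
      + ENNReal.ofReal ((Kseq t : ℝ) *
          (2 * Real.exp (-((nseq t : ℝ) * (ε / 2) ^ 2 / (8 * (L t) ^ 2))))))
      atTop (𝓝 0) := by
    have := (hT1.add hT2).add hT3
    simpa using this
  exact tendsto_of_tendsto_of_tendsto_of_le_of_le' tendsto_const_nhds hG
    (Eventually.of_forall fun t => zero_le) hmain
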